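/- Let p ≥ 5 be prime. For every k with 1 ≤ k ≤ p, ∑_{i=1}^{p-1} C(2i, i+k)/i ≡ (α(k) − 1)/k (mod p), where α(k) = 2·(−1)^k + 3·[3 divides p−k], and the sum is computed in the field of p elements. -/

import Mathlib

open Finset

/-- α(k) = 2(−1)^k + 3·[3 ∣ p−k]. -/
def alphaCoef (p k : ℕ) : ℤ := 2 * (-1) ^ k + 3 * (if 3 ∣ p - k then 1 else 0)

def g3 (m : ℕ) : ℤ := if m % 3 = 0 then 0 else if m % 3 = 1 then 1 else -1
def H6 (m : ℕ) : ℤ :=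
  if m % 6 = 0 then 0 else if m % 6 = 1 then 1 else if m % 6 = 2 then -2
  else if m % 6 = 3 then 2 else if m % 6 = 4 then -1 else 0

lemma g3_rec (m : ℕ) : g3 (m+2) = - g3 (m+1) - g3 m := by
  unfold g3
  have h3 : m % 3 = 0 ∨ m % 3 = 1 ∨ m % 3 = 2 := by omega
  rcases h3 with h | h | h <;>
    · have h1 : (m+1) % 3 = (m%3+1) % 3 := by omega
      have h2 : (m+2) % 3 = (m%3+2) % 3 := by omega
      rw [h] at h1 h2; norm_num at h1 h2; simp [h, h1, h2]

lemma H6_rec (m : ℕ) : H6 (m+1) = g3 (m+1) - H6 m := by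
  unfold g3 H6
  have h6 : m % 6 = 0 ∨ m % 6 = 1 ∨ m % 6 = 2 ∨ m % 6 = 3 ∨ m % 6 = 4 ∨ m % 6 = 5 := by omega
  rcases h6 with h | h | h | h | h | h <;>
    · have h1 : (m+1) % 6 = (m%6+1) % 6 := by omega
      have h2 : (m+1) % 3 = (m%6+1) % 3 := by omega
      rw [h] at h1 h2; norm_num at h1 h2; simp [h, h1, h2]

lemma H6_final (m : ℕ) (hm : 1 ≤ m) :
    H6 m - H6 (m-1) = -2 * (-1)^m + 3 * (if 3 ∣ m then 1 else 0) - 1 := by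
  obtain ⟨n, rfl⟩ : ∃ n, m = n + 1 := ⟨m - 1, by omega⟩
  have hpow : ((-1:ℤ))^(n+1) = if (n+1) % 2 = 0 then 1 else -1 := by
    rcases Nat.even_or_odd (n+1) with hp | hp
    · rw [Even.neg_one_pow hp, if_pos (Nat.even_iff.mp hp)]
    · rw [Odd.neg_one_pow hp, if_neg (by rw [Nat.odd_iff] at hp; omega)]
  unfold H6
  have h6 : n % 6 = 0 ∨ n % 6 = 1 ∨ n % 6 = 2 ∨ n % 6 = 3 ∨ n % 6 = 4 ∨ n % 6 = 5 := by omega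
  rcases h6 with h | h | h | h | h | h <;>
    · have h1 : (n+1) % 6 = (n%6+1) % 6 := by omega
      have h3 : (n+1) % 3 = (n%6+1) % 3 := by omega
      have h5 : (n+1) % 2 = (n%6+1) % 2 := by omega
      rw [h] at h1 h3 h5; norm_num at h1 h3 h5
      rw [hpow]
      simp [h, h1, h3, h5, Nat.dvd_iff_mod_eq_zero]

/-- key binomial identity over ℤ. -/
lemma key_id (a b : ℕ) :
    ((b : ℤ) + 1) * ((2*a+2).choose (a+b+2)) =
      ((a : ℤ) + 1) * (((2*a+1).choose (a+b+1) : ℤ) - ((2*a+1).choose (a+b+2) : ℤ)) := by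
  by_cases hba : b ≤ a
  · have h1 := Nat.choose_succ_right_eq (2*a+1) (a+b+1)
    have hsub : 2*a+1 - (a+b+1) = a - b := by omega
    rw [hsub] at h1
    have h1' : ((2*a+1).choose (a+b+2) : ℤ) * ((a:ℤ)+(b:ℤ)+2)
        = ((2*a+1).choose (a+b+1) : ℤ) * ((a:ℤ) - (b:ℤ)) := by
      have := congrArg (fun x : ℕ => (x : ℤ)) h1
      push_cast [Nat.cast_sub hba] at this
      linarith [this]
    have hp : ((2*a+2).choose (a+b+2) : ℤ)
        = ((2*a+1).choose (a+b+1) : ℤ) + ((2*a+1).choose (a+b+2) : ℤ) := by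
      have h2 : (2*a+2).choose (a+b+2) = (2*a+1).choose (a+b+1) + (2*a+1).choose (a+b+2) := by
        have := Nat.choose_succ_succ (2*a+1) (a+b+1)
        convert this using 2
      exact_mod_cast congrArg (fun x : ℕ => (x : ℤ)) h2
    rw [hp]
    linarith [h1']
  · push_neg at hba
    have e1 : (2*a+2).choose (a+b+2) = 0 := Nat.choose_eq_zero_of_lt (by omega)
    have e2 : (2*a+1).choose (a+b+1) = 0 := Nat.choose_eq_zero_of_lt (by omega)
    have e3 : (2*a+1).choose (a+b+2) = 0 := Nat.choose_eq_zero_of_lt (by omega)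
    rw [e1, e2, e3]; ring

/-- double Pascal -/
lemma dpascal (n m : ℕ) :
    (n+2).choose (m+2) = n.choose m + 2 * n.choose (m+1) + n.choose (m+2) := by
  simp [Nat.choose_succ_succ]; ring

def Fsum (p d : ℕ) : ZMod p := ∑ i ∈ Icc 1 (p-1), ((2*i).choose (i+d) : ZMod p)
def Tsum (p e : ℕ) : ZMod p := ∑ i ∈ Icc 1 (p-1), ((2*i-1).choose (i+e) : ZMod p)

variable (p : ℕ) [Fact p.Prime]

lemma choose_2p_zero (d : ℕ) (hd1 : 1 ≤ d) (hd2 : d ≤ p-1) :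
    ((2*p).choose (p+d) : ZMod p) = 0 := by
  have hp2 : 2 ≤ p := (Fact.out : p.Prime).two_le
  have h := (Choose.choose_modEq_choose_mod_mul_choose_div_nat (p := p) (n := 2*p) (k := p+d))
  have h1 : (2*p) % p = 0 := by rw [Nat.mul_comm]; exact Nat.mul_mod_right p 2
  have h2 : (p+d) % p = d := by
    rw [Nat.add_mod_left, Nat.mod_eq_of_lt (by omega)]
  have h3 : (0:ℕ).choose d = 0 := Nat.choose_eq_zero_of_lt (by omega)
  rw [h1, h2, h3] at h
  simp only [zero_mul] at h
  exact (ZMod.natCast_eq_zero_iff _ _).mpr ((Nat.modEq_zero_iff_dvd).mp h)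

lemma Tsum_add (b : ℕ) : Tsum p b + Tsum p (b+1) = Fsum p (b+1) := by
  unfold Tsum Fsum
  rw [← Finset.sum_add_distrib]
  apply Finset.sum_congr rfl
  intro i hi
  simp only [Finset.mem_Icc] at hi
  obtain ⟨a, rfl⟩ : ∃ a, i = a + 1 := ⟨i - 1, by omega⟩
  have e1 : 2*(a+1) - 1 = 2*a+1 := by omega
  have e2 : 2*(a+1) = (2*a+1) + 1 := by omega
  have e3 : (a+1) + (b+1) = (a+1+b) + 1 := by omega
  have hcs : ((2*a+1)+1).choose ((a+1+b)+1)
      = (2*a+1).choose (a+1+b) + (2*a+1).choose ((a+1+b)+1) := Nat.choose_succ_succ _ _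
  rw [e1, e2, e3, hcs]
  push_cast
  ring

lemma Frec (e : ℕ) (he1 : 1 ≤ e) (he2 : e ≤ p-2) :
    Fsum p e + Fsum p (e+1) + Fsum p (e+2) = 0 := by
  have hp2 : 2 ≤ p := (Fact.out : p.Prime).two_le
  set f : ℕ → ZMod p := fun j => ((2*j).choose (j+(e+1)) : ZMod p) with hf
  have key1 : ∑ i ∈ Icc 1 (p-1), f (i+1)
      = Fsum p e + 2 * Fsum p (e+1) + Fsum p (e+2) := by
    unfold Fsum
    rw [Finset.mul_sum, ← Finset.sum_add_distrib, ← Finset.sum_add_distrib]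
    apply Finset.sum_congr rfl
    intro i _
    have e1 : 2*(i+1) = 2*i+2 := by omega
    have e2 : (i+1)+(e+1) = (i+e)+2 := by omega
    have e3 : i + (e+1) = (i+e)+1 := by omega
    have e4 : i + (e+2) = (i+e)+2 := by omega
    simp only [hf, e1, e2, e3, e4, dpascal]
    push_cast
    ring
  have hshift : ∑ i ∈ Icc 1 (p-1), f (i+1) = ∑ j ∈ Icc 2 p, f j := by
    have hmap : (Icc 1 (p-1)).map (addRightEmbedding 1) = Icc 2 p := by
      rw [Finset.map_add_right_Icc]
      congr 1
      omega
    rw [← hmap, Finset.sum_map]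
    rfl
  have hbot : ∑ j ∈ Icc 1 p, f j = f 1 + ∑ j ∈ Icc 2 p, f j := by
    have hsplit : Icc 2 p = Ioc 1 p := by rw [← Finset.Icc_add_one_left_eq_Ioc]; rfl
    rw [hsplit, ← Finset.sum_insert (by simp), Finset.Ioc_insert_left (by omega : (1:ℕ) ≤ p)]
  have htop : ∑ j ∈ Icc 1 p, f j = ∑ j ∈ Icc 1 (p-1), f j + f p := by
    have h1 : Icc 1 p = Icc 1 ((p-1)+1) := by congr 1; omega
    have h2 : p - 1 + 1 = p := by omega
    rw [h1, Finset.sum_Icc_succ_top (by omega), h2]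
  have hf1 : f 1 = 0 := by
    simp only [hf]
    rw [Nat.choose_eq_zero_of_lt (by omega)]
    simp
  have hfp : f p = 0 := choose_2p_zero p (e+1) (by omega) (by omega)
  have key2 : ∑ i ∈ Icc 1 (p-1), f (i+1) = Fsum p (e+1) := by
    rw [hshift]
    have : ∑ j ∈ Icc 2 p, f j = ∑ j ∈ Icc 1 p, f j := by rw [hbot, hf1, zero_add]
    rw [this, htop, hfp, add_zero]
    rfl
  have h := key1.symm.trans key2
  linear_combination h

lemma Fsum_p : Fsum p p = 0 := by
  unfold Fsum
  apply Finset.sum_eq_zero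
  intro i hi
  simp only [mem_Icc] at hi
  rw [Nat.choose_eq_zero_of_lt (by omega)]
  simp

lemma Fsum_p1 (hp2 : 2 ≤ p) : Fsum p (p-1) = 1 := by
  unfold Fsum
  rw [Finset.sum_eq_single_of_mem (p-1) (by simp only [mem_Icc]; omega)]
  · have h : 2*(p-1) = (p-1) + (p-1) := by omega
    rw [h, Nat.choose_self]
    simp
  · intro i hi hne
    simp only [mem_Icc] at hi
    rw [Nat.choose_eq_zero_of_lt (by omega)]
    simp

lemma Fval (m : ℕ) (hm : m ≤ p - 1) (hp2 : 2 ≤ p) : Fsum p (p - m) = (g3 m : ZMod p) := by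
  induction m using Nat.strong_induction_on with
  | _ m ih =>
    match m, hm with
    | 0, _ => simpa [g3] using Fsum_p p
    | 1, hm => simpa [g3] using Fsum_p1 p hp2
    | (m+2), hm =>
      have h := Frec p (p-(m+2)) (by omega) (by omega)
      have e1 : p-(m+2)+1 = p-(m+1) := by omega
      have e2 : p-(m+2)+2 = p-m := by omega
      rw [e1, e2, ih (m+1) (by omega) (by omega), ih m (by omega) (by omega)] at h
      have := g3_rec m
      have hcast : ((g3 (m+2) : ℤ) : ZMod p) = ((- g3 (m+1) - g3 m : ℤ) : ZMod p) := by
        rw [this]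
      push_cast at hcast
      rw [hcast]
      linear_combination h

lemma Tsum_top (hp2 : 2 ≤ p) : Tsum p (p-1) = 0 := by
  unfold Tsum
  apply Finset.sum_eq_zero
  intro i hi
  simp only [mem_Icc] at hi
  rw [Nat.choose_eq_zero_of_lt (by omega)]
  simp

lemma Tval (m : ℕ) (hm : m ≤ p - 1) (hp2 : 2 ≤ p) :
    Tsum p (p - 1 - m) = (H6 m : ZMod p) := by
  induction m with
  | zero => simpa [H6] using Tsum_top p hp2
  | succ m ih =>
    have hm' : m ≤ p - 1 := by omega
    have h := Tsum_add p (p-2-m)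
    have e1 : p-2-m+1 = p-1-m := by omega
    have e2 : p-1-(m+1) = p-2-m := by omega
    rw [e1] at h
    have hF : Fsum p (p-1-m) = (g3 (m+1) : ZMod p) := by
      have e3 : p - (m+1) = p-1-m := by omega
      rw [← e3]
      exact Fval p (m+1) (by omega) hp2
    rw [ih hm', hF] at h
    have := H6_rec m
    have hcast : ((H6 (m+1) : ℤ) : ZMod p) = ((g3 (m+1) - H6 m : ℤ) : ZMod p) := by rw [this]
    push_cast at hcast
    rw [e2, hcast]
    linear_combination h

lemma stepA (k : ℕ) (hk1 : 1 ≤ k) (hkp : k ≤ p - 1) :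
    (k : ZMod p) * (∑ i ∈ Icc 1 (p - 1), ((2 * i).choose (i + k) : ZMod p) / (i : ZMod p))
      = Tsum p (k-1) - Tsum p k := by
  unfold Tsum
  rw [Finset.mul_sum, ← Finset.sum_sub_distrib]
  apply Finset.sum_congr rfl
  intro i hi
  simp only [mem_Icc] at hi
  have hi0 : (i : ZMod p) ≠ 0 := by
    intro h
    have := (ZMod.natCast_eq_zero_iff _ _).mp h
    have := Nat.le_of_dvd (by omega) this
    omega
  obtain ⟨a, rfl⟩ : ∃ a, i = a + 1 := ⟨i - 1, by omega⟩
  obtain ⟨b, rfl⟩ : ∃ b, k = b + 1 := ⟨k - 1, by omega⟩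
  have e1 : 2*(a+1) = 2*a+2 := by omega
  have e2 : (a+1)+(b+1) = a+b+2 := by omega
  have e3 : 2*(a+1)-1 = 2*a+1 := by omega
  have e4 : (a+1)+(b+1)-1 = a+b+1 := by omega
  have e5 : (a+1)+(b+1-1) = a+b+1 := by omega
  rw [e3, e5, e2, e1]
  -- cast key identity into ZMod p
  have hz : ((b:ZMod p)+1) * ((2*a+2).choose (a+b+2) : ZMod p)
      = ((a:ZMod p)+1) * (((2*a+1).choose (a+b+1) : ZMod p) - ((2*a+1).choose (a+b+2) : ZMod p)) := by
    have := congrArg (fun z : ℤ => (z : ZMod p)) (key_id a b)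
    push_cast at this
    exact_mod_cast this
  have hne : ((a:ZMod p)+1) ≠ 0 := by exact_mod_cast hi0
  rw [div_eq_mul_inv]
  push_cast
  field_simp
  linear_combination hz


theorem sum_binom_shift_div (p : ℕ) [Fact p.Prime] (hp5 : 5 ≤ p)
    (k : ℕ) (hk1 : 1 ≤ k) (hkp : k ≤ p) :
    (∑ i ∈ Finset.Icc 1 (p - 1), ((2 * i).choose (i + k) : ZMod p) / (i : ZMod p)) =
      ((alphaCoef p k : ZMod p) - 1) / (k : ZMod p) := by
  have hp2 : 2 ≤ p := by omega
  have hodd : Odd p := (Fact.out : p.Prime).odd_of_ne_two (by omega)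
  by_cases hk : k = p
  · have hoddk : Odd k := by rw [hk]; exact hodd
    have hL : (∑ i ∈ Finset.Icc 1 (p - 1), ((2 * i).choose (i + k) : ZMod p) / (i : ZMod p)) = 0 := by
      apply Finset.sum_eq_zero
      intro i hi
      simp only [Finset.mem_Icc] at hi
      rw [Nat.choose_eq_zero_of_lt (by omega)]
      simp
    have hA : alphaCoef p k = 1 := by
      unfold alphaCoef
      rw [Odd.neg_one_pow hoddk, hk]
      simp
    rw [hL, hA]
    simp
  · have hkp1 : k ≤ p - 1 := by omega
    set m : ℕ := p - k with hm
    have hm1 : 1 ≤ m := by omega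
    have hmp : m ≤ p - 1 := by omega
    have hS := stepA p k hk1 hkp1
    have hT1 : Tsum p (k-1) = (H6 m : ZMod p) := by
      have e : p - 1 - m = k - 1 := by omega
      rw [← e]
      exact Tval p m hmp hp2
    have hT2 : Tsum p k = (H6 (m-1) : ZMod p) := by
      have e : p - 1 - (m-1) = k := by omega
      rw [← e]
      exact Tval p (m-1) (by omega) hp2
    rw [hT1, hT2] at hS
    have hHf := H6_final m hm1
    -- (-1)^k = -(-1)^m in ℤ
    have hpow : ((-1:ℤ))^k = -((-1:ℤ))^m := by
      have h1 : ((-1:ℤ))^k * (-1)^m = -1 := by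
        rw [← pow_add, show k + m = p by omega]
        exact Odd.neg_one_pow hodd
      have h2 : ((-1:ℤ))^m * (-1)^m = 1 := by
        rw [← mul_pow]; norm_num
      linear_combination ((-1:ℤ))^m * h1 - ((-1:ℤ))^k * h2
    have hAlpha : (alphaCoef p k : ℤ) - 1 = H6 m - H6 (m-1) := by
      unfold alphaCoef
      rw [hHf, hpow, ← hm]
      ring
    have hS2 : (k : ZMod p) * (∑ i ∈ Finset.Icc 1 (p - 1),
        ((2 * i).choose (i + k) : ZMod p) / (i : ZMod p)) = ((alphaCoef p k : ℤ) - 1 : ℤ) := by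
      rw [hAlpha]
      push_cast
      linear_combination hS
    have hk0 : (k : ZMod p) ≠ 0 := by
      intro h
      have := (ZMod.natCast_eq_zero_iff _ _).mp h
      have := Nat.le_of_dvd (by omega) this
      omega
    rw [eq_div_iff hk0]
    push_cast at hS2 ⊢
    linear_combination hS2
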